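/- arXiv:1301.2967 — 10 statements merged into one kernel-verified Lean document; each statement's English description precedes it below -/
import Mathlib

section
/- Let k ≥ 2 and let a_1,…,a_k be integers, and set s_j = a_1 + a_2 + … + a_j for 1 ≤ j ≤ k. Define sequences A_1,…,A_k : ℕ → ℤ (the numbers of nodes carrying each of the k labels (s_1),(s_2),…,(s_k) at each level of the generating tree of the succession rule (a_1); (s_j) ⇝ (s_{j+1})(s_1)^{s_j−1} for 1 ≤ j ≤ k−1; (s_k) ⇝ (s_k)(s_1)^{s_k−1}) by: A_1(0)=1, A_j(0)=0 for 2 ≤ j ≤ k, and for all n ≥ 0: A_1(n+1) = Σ_{j=1}^{k} (s_j − 1)·A_j(n); A_{j+1}(n+1) = A_j(n) for 1 ≤ j ≤ k−2; A_k(n+1) = A_{k−1}(n) + A_k(n). Then for every n ≥ 0, Σ_{j=1}^{k} A_j(n) = f_n, where f is the C-finite sequence with coefficients a_1,…,a_k and default initial conditions. -/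
/-- Extension of a sequence `ℕ → ℤ` to `ℤ`, zero on negatives. -/
private def gg (f : ℕ → ℤ) : ℤ → ℤ := fun m => if 0 ≤ m then f m.toNat else 0

private lemma gg_neg (f : ℕ → ℤ) {m : ℤ} (h : m < 0) : gg f m = 0 := by
  simp [gg, not_le.mpr h]

private lemma gg_nat (f : ℕ → ℤ) (n : ℕ) : gg f n = f n := by
  simp [gg]

/-- Telescoping sum over `Icc`. -/
private lemma tel (H : ℕ → ℤ) : ∀ b a : ℕ, a ≤ b + 1 →
    ∑ j ∈ Finset.Icc a b, (H j - H (j + 1)) = H a - H (b + 1) := by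
  intro b
  induction b with
  | zero =>
    intro a ha
    interval_cases a
    · simp
    · simp
  | succ b ih =>
    intro a ha
    rcases Nat.lt_or_ge a (b + 2) with h | h
    · rw [Finset.sum_Icc_succ_top (by omega), ih a (by omega)]
      ring
    · have : a = b + 2 := by omega
      subst this
      simp

/-- The total number of nodes per level in the generating tree of the succession rule
`(a₁); (s_j) ⇝ (s_{j+1})(s_1)^{s_j−1}, (s_k) ⇝ (s_k)(s_1)^{s_k−1}` equals the C-finite
sequence with coefficients `a₁, …, a_k` and default initial conditions. -/
theorem stmt_0 (k : ℕ) (hk : 2 ≤ k) (a : ℕ → ℤ)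
    (f : ℕ → ℤ) (hf0 : f 0 = 1)
    (hf : ∀ n : ℕ, 1 ≤ n →
      f n = ∑ i ∈ Finset.Icc 1 k, a i * (if i ≤ n then f (n - i) else 0))
    (s : ℕ → ℤ) (hs : ∀ j, s j = ∑ l ∈ Finset.Icc 1 j, a l)
    (A : ℕ → ℕ → ℤ)
    (hA10 : A 1 0 = 1)
    (hAj0 : ∀ j, 2 ≤ j → j ≤ k → A j 0 = 0)
    (hA1 : ∀ n : ℕ, A 1 (n + 1) = ∑ j ∈ Finset.Icc 1 k, (s j - 1) * A j n)
    (hAmid : ∀ n : ℕ, ∀ j, 1 ≤ j → j ≤ k - 2 → A (j + 1) (n + 1) = A j n)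
    (hAk : ∀ n : ℕ, A k (n + 1) = A (k - 1) n + A k n) :
    ∀ n : ℕ, ∑ j ∈ Finset.Icc 1 k, A j n = f n := by
  obtain ⟨m, rfl⟩ : ∃ m, k = m + 2 := ⟨k - 2, by omega⟩
  -- the recurrence for gg f, valid for all n : ℕ
  have grec : ∀ n : ℕ,
      gg f ((n : ℤ) + 1) = ∑ i ∈ Finset.Icc 1 (m + 2), a i * gg f ((n : ℤ) + 1 - i) := by
    intro n
    have h1 : ((n : ℤ) + 1) = ((n + 1 : ℕ) : ℤ) := by push_cast; ring
    rw [h1, gg_nat, hf (n + 1) (by omega)]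
    apply Finset.sum_congr rfl
    intro i hi
    rw [Finset.mem_Icc] at hi
    by_cases h : i ≤ n + 1
    · have h2 : ((n + 1 : ℕ) : ℤ) - (i : ℤ) = ((n + 1 - i : ℕ) : ℤ) := by
        push_cast [Nat.cast_sub h]; ring
      rw [if_pos h, h2, gg_nat]
    · rw [if_neg h, gg_neg f (show ((n + 1 : ℕ) : ℤ) - (i : ℤ) < 0 by omega)]
  -- the key closed form for A j n
  have key : ∀ n : ℕ,
      (∀ j : ℕ, 1 ≤ j → j + 1 ≤ m + 2 →
        A j n = gg f ((n : ℤ) - j + 1) - gg f ((n : ℤ) - j)) ∧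
      A (m + 2) n = gg f ((n : ℤ) - (m + 2) + 1) := by
    intro n
    induction n with
    | zero =>
      constructor
      · intro j h1 h2
        rcases Nat.lt_or_ge j 2 with h | h
        · have : j = 1 := by omega
          subst this
          have e0 : ((0:ℕ):ℤ) - ((1:ℕ):ℤ) + 1 = (((0:ℕ):ℤ)) := by omega
          rw [hA10, gg_neg f (show ((0:ℕ):ℤ) - ((1:ℕ):ℤ) < 0 by omega), e0, gg_nat, hf0]
          norm_num
        · rw [hAj0 j h (by omega),
            gg_neg f (show ((0:ℕ):ℤ) - ((j:ℕ):ℤ) + 1 < 0 by omega),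
            gg_neg f (show ((0:ℕ):ℤ) - ((j:ℕ):ℤ) < 0 by omega)]
          norm_num
      · rw [hAj0 (m + 2) (by omega) le_rfl]
        exact (gg_neg f (by omega)).symm
    | succ n ih =>
      obtain ⟨ih1, ihk⟩ := ih
      set D : ℕ → ℤ := fun j =>
        if j = m + 2 then gg f ((n : ℤ) - (m + 2) + 1)
        else gg f ((n : ℤ) - j + 1) - gg f ((n : ℤ) - j) with hD
      have hAD : ∀ j ∈ Finset.Icc 1 (m + 2), A j n = D j := by
        intro j hj
        rw [Finset.mem_Icc] at hj
        by_cases h : j = m + 2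
        · subst h; simp only [hD, if_pos rfl]; exact ihk
        · simp only [hD, if_neg h]; exact ih1 j hj.1 (by omega)
      have hDsum : ∀ l ∈ Finset.Icc 1 (m + 2),
          ∑ j ∈ Finset.Icc l (m + 2), D j = gg f ((n : ℤ) - l + 1) := by
        intro l hl
        rw [Finset.mem_Icc] at hl
        rw [Finset.sum_Icc_succ_top (by omega)]
        have h1 : ∑ j ∈ Finset.Icc l (m + 1), D j
            = ∑ j ∈ Finset.Icc l (m + 1),
              ((fun j : ℕ => gg f ((n : ℤ) - j + 1)) j
                - (fun j : ℕ => gg f ((n : ℤ) - j + 1)) (j + 1)) := by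
          apply Finset.sum_congr rfl
          intro j hj
          rw [Finset.mem_Icc] at hj
          simp only [hD, if_neg (show j ≠ m + 2 by omega)]
          push_cast
          ring_nf
        rw [h1, tel _ (m + 1) l (by omega)]
        simp only [hD, if_pos rfl]
        push_cast
        ring_nf
      have htot : ∑ j ∈ Finset.Icc 1 (m + 2), A j n = gg f (n : ℤ) := by
        rw [Finset.sum_congr rfl hAD, hDsum 1 (by simp)]
        norm_num
      have hS : ∑ j ∈ Finset.Icc 1 (m + 2), s j * A j n = gg f ((n : ℤ) + 1) := by
        have h1 : ∑ j ∈ Finset.Icc 1 (m + 2), s j * A j n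
            = ∑ j ∈ Finset.Icc 1 (m + 2), ∑ l ∈ Finset.Icc 1 j, a l * D j := by
          apply Finset.sum_congr rfl
          intro j hj
          rw [hAD j hj, hs j, Finset.sum_mul]
        rw [h1, Finset.sum_comm' (s' := fun l => Finset.Icc l (m + 2))
          (t' := Finset.Icc 1 (m + 2)) (by
            intro x y
            simp only [Finset.mem_Icc]
            omega)]
        rw [grec n]
        apply Finset.sum_congr rfl
        intro l hl
        rw [← Finset.mul_sum, hDsum l hl]
        congr 1
        ring_nf
      have hA1n : A 1 (n + 1) = gg f ((n : ℤ) + 1) - gg f (n : ℤ) := by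
        rw [hA1 n]
        have h2 : ∑ j ∈ Finset.Icc 1 (m + 2), (s j - 1) * A j n
            = (∑ j ∈ Finset.Icc 1 (m + 2), s j * A j n)
              - ∑ j ∈ Finset.Icc 1 (m + 2), A j n := by
          rw [← Finset.sum_sub_distrib]
          apply Finset.sum_congr rfl
          intro j _
          ring
        rw [h2, htot, hS]
      constructor
      · intro j h1 h2
        rcases Nat.lt_or_ge j 2 with h | h
        · have : j = 1 := by omega
          subst this
          rw [hA1n]
          congr 1 <;> · push_cast; ring_nf
        · have hmid := hAmid n (j - 1) (by omega) (by omega)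
          rw [show j - 1 + 1 = j from by omega] at hmid
          rw [hmid, ih1 (j - 1) (by omega) (by omega)]
          have hc : ((j - 1 : ℕ) : ℤ) = (j : ℤ) - 1 := by
            push_cast [Nat.cast_sub (show 1 ≤ j by omega)]; ring
          rw [hc]
          congr 1 <;> · push_cast; ring_nf
      · rw [hAk n]
        rw [show m + 2 - 1 = m + 1 from by omega]
        rw [ih1 (m + 1) (by omega) (by omega), ihk]
        have harg1 : (n : ℤ) - ((m + 1 : ℕ) : ℤ) + 1 = ((n + 1 : ℕ) : ℤ) - ((m : ℤ) + 2) + 1 := by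
          push_cast; ring
        have harg2 : (n : ℤ) - ((m + 1 : ℕ) : ℤ) = (n : ℤ) - ((m : ℤ) + 2) + 1 := by
          push_cast; ring
        rw [harg1, harg2]
        ring
  intro n
  obtain ⟨ih1, ihk⟩ := key n
  have hAD : ∀ j ∈ Finset.Icc 1 (m + 2), A j n =
      (if j = m + 2 then gg f ((n : ℤ) - (m + 2) + 1)
       else gg f ((n : ℤ) - j + 1) - gg f ((n : ℤ) - j)) := by
    intro j hj
    rw [Finset.mem_Icc] at hj
    by_cases h : j = m + 2
    · subst h; simp only [if_pos rfl]; exact ihk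
    · simp only [if_neg h]; exact ih1 j hj.1 (by omega)
  rw [Finset.sum_congr rfl hAD]
  rw [Finset.sum_Icc_succ_top (show 1 ≤ m + 2 by omega)]
  have h1 : ∑ j ∈ Finset.Icc 1 (m + 1),
      (if j = m + 2 then gg f ((n : ℤ) - (m + 2) + 1)
       else gg f ((n : ℤ) - j + 1) - gg f ((n : ℤ) - j))
      = ∑ j ∈ Finset.Icc 1 (m + 1),
        ((fun j : ℕ => gg f ((n : ℤ) - j + 1)) j
          - (fun j : ℕ => gg f ((n : ℤ) - j + 1)) (j + 1)) := by
    apply Finset.sum_congr rfl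
    intro j hj
    rw [Finset.mem_Icc] at hj
    rw [if_neg (show j ≠ m + 2 by omega)]
    push_cast
    ring_nf
  rw [h1, tel _ (m + 1) 1 (by omega), if_pos rfl]
  have e1 : (n : ℤ) - ((1 : ℕ) : ℤ) + 1 = ((n : ℕ) : ℤ) := by omega
  have e2 : (n : ℤ) - ((m + 1 + 1 : ℕ) : ℤ) + 1 = (n : ℤ) - ((m : ℤ) + 2) + 1 := by
    push_cast; ring
  rw [e1, e2, gg_nat]
  ring
end

section
/- Let a_1 > 0 and a_2 be integers, and let q_2, r_2 be integers such that: if a_1 + a_2 ≤ 0 then q_2 > 0, r_2 > 0 and −(a_1 + a_2) = q_2·a_1 − r_2; otherwise q_2 = 0 and r_2 = a_1 + a_2. Define sequences A, R, Z : ℕ → ℤ (the numbers of nodes labelled (a_1), (r_2), (0) at each level of the generating tree of the succession rule (a_1); (a_1) ⇝ (0)^{q_2}(r_2)(a_1)^{a_1−(q_2+1)}; (r_2) ⇝ ((0)^{q_2}(r_2))^{q_2}(0)^{q_2}(r_2)(a_1)^{r_2−(q_2+1)^2}, where (0) produces no sons) by: A(0)=1, R(0)=Z(0)=0, and for n ≥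 0: A(n+1) = (a_1−q_2−1)·A(n) + (r_2−(q_2+1)^2)·R(n); R(n+1) = A(n) + (q_2+1)·R(n); Z(n+1) = q_2·A(n) + q_2(q_2+1)·R(n). Then for every n ≥ 0, A(n) + R(n) + Z(n) = f_n, where f is the C-finite sequence with coefficients a_1, a_2 and default initial conditions. -/
/-- The numbers of nodes labelled `(a₁)`, `(r₂)`, `(0)` per level of the generating tree of
the succession rule (13) of the paper sum to the C-finite sequence with coefficients
`a₁, a₂` and default initial conditions. -/
theorem stmt_1 (a1 a2 : ℤ) (ha1 : 0 < a1)
    (q2 r2 : ℤ)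
    (hneg : a1 + a2 ≤ 0 → 0 < q2 ∧ 0 < r2 ∧ -(a1 + a2) = q2 * a1 - r2)
    (hpos : 0 < a1 + a2 → q2 = 0 ∧ r2 = a1 + a2)
    (A R Z : ℕ → ℤ)
    (hA0 : A 0 = 1) (hR0 : R 0 = 0) (hZ0 : Z 0 = 0)
    (hA : ∀ n : ℕ, A (n + 1) = (a1 - q2 - 1) * A n + (r2 - (q2 + 1) ^ 2) * R n)
    (hR : ∀ n : ℕ, R (n + 1) = A n + (q2 + 1) * R n)
    (hZ : ∀ n : ℕ, Z (n + 1) = q2 * A n + q2 * (q2 + 1) * R n)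
    (f : ℕ → ℤ) (hf0 : f 0 = 1) (hf1 : f 1 = a1)
    (hf : ∀ n : ℕ, f (n + 2) = a1 * f (n + 1) + a2 * f n) :
    ∀ n : ℕ, A n + R n + Z n = f n := by
  have hr2 : r2 = q2 * a1 + a1 + a2 := by
    rcases le_or_gt (a1 + a2) 0 with h | h
    · obtain ⟨_, _, h3⟩ := hneg h; linarith
    · obtain ⟨h1, h2⟩ := hpos h; rw [h1, h2]; ring
  have hZR : ∀ n, Z n = q2 * R n := by
    intro n
    cases n with
    | zero => rw [hZ0, hR0]; ring
    | succ m => rw [hZ m, hR m]; ring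
  subst hr2
  intro n
  induction n using Nat.twoStepInduction with
  | zero => rw [hA0, hR0, hZ0, hf0]; ring
  | one => rw [hA 0, hR 0, hZ 0, hA0, hR0, hf1]; ring
  | more m ih1 ih2 =>
    rw [hf m, ← ih1, ← ih2]
    simp only [hZ, hR, hA, hZR]
    ring
end

section
/- Let k ≥ 3 and let a_1 > 0, a_2,…,a_k be integers, with s_i = a_1 + … + a_i. For each 2 ≤ i ≤ k let q_i, r_i be integers such that: if s_i ≤ 0 then q_i > 0, r_i > 0 and −s_i = q_i·a_1 − r_i; otherwise q_i = 0 and r_i = s_i. Define sequences A, R_2,…,R_k, Z : ℕ → ℤ (the numbers of nodes labelled (a_1), (r_2),…,(r_k), (0) at each level of the generating tree of the succession rule (a_1); (a_1) ⇝ (0)^{q_2}(r_2)(a_1)^{a_1−(q_2+1)}; (r_i) ⇝ ((0)^{q_2}(r_2))^{q_i}(0)^{q_{i+1}}(r_{i+1})(a_1)^{r_i−(q_i(q_2+1)+q_{i+1}+1)} for 2 ≤ i ≤ k−1; (r_k) ⇝ ((0)^{q_2}(r_2))^{q_k}(0)^{q_k}(r_k)(a_1)^{r_k−(q_k(q_2+1)+q_k+1)},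 where (0) produces no sons) by: A(0)=1, all other values at 0 equal to 0, and for n ≥ 0: A(n+1) = (a_1−q_2−1)·A(n) + Σ_{i=2}^{k−1} (r_i−q_i(q_2+1)−q_{i+1}−1)·R_i(n) + (r_k−q_k(q_2+1)−q_k−1)·R_k(n); R_2(n+1) = A(n) + Σ_{i=2}^{k} q_i·R_i(n); R_{i+1}(n+1) = R_i(n) for 2 ≤ i ≤ k−2; R_k(n+1) = R_{k−1}(n) + R_k(n); Z(n+1) = q_2·A(n) + Σ_{i=2}^{k−1} (q_i·q_2 + q_{i+1})·R_i(n) + (q_k·q_2 + q_k)·R_k(n). Then for every n ≥ 0, A(n) + Σ_{i=2}^{k} R_i(n) + Z(n) = f_n, where f is the C-finite sequence with coefficients a_1,…,a_k and default initial conditions. -/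
private lemma sum_Icc_bot' (F : ℕ → ℤ) {a b : ℕ} (h : a ≤ b) :
    (∑ i ∈ Finset.Icc a b, F i) = F a + ∑ i ∈ Finset.Icc (a+1) b, F i := by
  rw [Finset.Icc_add_one_left_eq_Ioc, ← Finset.Ioc_insert_left h, Finset.sum_insert (by simp)]

private lemma sum_Icc_bot2 (F : ℕ → ℤ) {a a' b : ℕ} (h : a ≤ b) (h1 : a' = a + 1) :
    (∑ i ∈ Finset.Icc a b, F i) = F a + ∑ i ∈ Finset.Icc a' b, F i := by
  subst h1; exact sum_Icc_bot' F h

private lemma sum_Icc_top' (F : ℕ → ℤ) {a b c : ℕ} (h : a ≤ b) (h2 : b = c + 1) :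
    (∑ i ∈ Finset.Icc a b, F i) = (∑ i ∈ Finset.Icc a c, F i) + F b := by
  subst h2; exact Finset.sum_Icc_succ_top (by omega) F

private lemma shift_aux' (F : ℕ → ℤ) (a b : ℕ) :
    (∑ i ∈ Finset.Icc (a+1) (b+1), F i) = ∑ i ∈ Finset.Icc a b, F (i+1) := by
  rw [← Finset.map_add_right_Icc a b 1, Finset.sum_map]
  rfl

private lemma shift_aux2 (F : ℕ → ℤ) {a b a' b' : ℕ} (h1 : a = a' + 1) (h2 : b = b' + 1) :
    (∑ i ∈ Finset.Icc a b, F i) = ∑ i ∈ Finset.Icc a' b', F (i + 1) := by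
  subst h1 h2; exact shift_aux' F a' b'

private lemma tele_aux' (h : ℕ → ℤ) : ∀ m, 1 ≤ m →
    (∑ i ∈ Finset.Icc 2 m, (h i - h (i+1))) = h 2 - h (m+1) := by
  intro m hm
  induction m with
  | zero => omega
  | succ m ih =>
    rcases Nat.lt_or_ge m 1 with h1 | h1
    · interval_cases m
      rw [Finset.Icc_eq_empty (by omega)]
      simp
    · rw [Finset.sum_Icc_succ_top (by omega), ih h1]
      ring

private lemma tele_aux2 (h : ℕ → ℤ) {m t : ℕ} (hm : 1 ≤ m) (ht : t = m + 1) :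
    (∑ i ∈ Finset.Icc 2 m, (h i - h (i+1))) = h 2 - h t := by
  subst ht; exact tele_aux' h m hm

private lemma abel_aux' (a x : ℕ → ℤ) : ∀ m, 1 ≤ m →
    (∑ i ∈ Finset.Icc 1 m, a i * x i)
      = (∑ i ∈ Finset.Icc 1 (m-1), (∑ l ∈ Finset.Icc 1 i, a l) * (x i - x (i+1)))
        + (∑ l ∈ Finset.Icc 1 m, a l) * x m := by
  intro m hm
  induction m with
  | zero => omega
  | succ m ih =>
    rcases Nat.lt_or_ge m 1 with h1 | h1
    · interval_cases m
      simp
    · rw [Finset.sum_Icc_succ_top (show 1 ≤ m+1 by omega), ih h1,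
        show m + 1 - 1 = (m - 1) + 1 by omega,
        Finset.sum_Icc_succ_top (show 1 ≤ m - 1 + 1 by omega),
        show m - 1 + 1 = m by omega,
        Finset.sum_Icc_succ_top (show 1 ≤ m + 1 by omega)]
      ring

/-- General-degree version: the numbers of nodes labelled `(a₁)`, `(r₂), …, (r_k)`, `(0)`
per level of the generating tree of succession rule (14) of the paper sum to the C-finite
sequence with coefficients `a₁, …, a_k` and default initial conditions. -/
theorem stmt_2 (k : ℕ) (hk : 3 ≤ k) (a : ℕ → ℤ) (ha1 : 0 < a 1)
    (s : ℕ → ℤ) (hs : ∀ i, s i = ∑ l ∈ Finset.Icc 1 i, a l)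
    (q r : ℕ → ℤ)
    (hqr : ∀ i, 2 ≤ i → i ≤ k →
      (s i ≤ 0 → 0 < q i ∧ 0 < r i ∧ -(s i) = q i * a 1 - r i) ∧
      (0 < s i → q i = 0 ∧ r i = s i))
    (f : ℕ → ℤ) (hf0 : f 0 = 1)
    (hf : ∀ n : ℕ, 1 ≤ n →
      f n = ∑ i ∈ Finset.Icc 1 k, a i * (if i ≤ n then f (n - i) else 0))
    (A Z : ℕ → ℤ) (R : ℕ → ℕ → ℤ)
    (hA0 : A 0 = 1) (hZ0 : Z 0 = 0) (hR0 : ∀ i, 2 ≤ i → i ≤ k → R i 0 = 0)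
    (hA : ∀ n : ℕ, A (n + 1) = (a 1 - q 2 - 1) * A n
        + (∑ i ∈ Finset.Icc 2 (k - 1), (r i - q i * (q 2 + 1) - q (i + 1) - 1) * R i n)
        + (r k - q k * (q 2 + 1) - q k - 1) * R k n)
    (hR2 : ∀ n : ℕ, R 2 (n + 1) = A n + ∑ i ∈ Finset.Icc 2 k, q i * R i n)
    (hRmid : ∀ n : ℕ, ∀ i, 2 ≤ i → i ≤ k - 2 → R (i + 1) (n + 1) = R i n)
    (hRk : ∀ n : ℕ, R k (n + 1) = R (k - 1) n + R k n)
    (hZ : ∀ n : ℕ, Z (n + 1) = q 2 * A n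
        + (∑ i ∈ Finset.Icc 2 (k - 1), (q i * q 2 + q (i + 1)) * R i n)
        + (q k * q 2 + q k) * R k n) :
    ∀ n : ℕ, A n + (∑ i ∈ Finset.Icc 2 k, R i n) + Z n = f n := by
  obtain ⟨m, rfl⟩ : ∃ m, k = m + 3 := ⟨k - 3, by omega⟩
  simp only [show m + 3 - 1 = m + 2 by omega, show m + 3 - 2 = m + 1 by omega] at *
  set g : ℤ → ℤ := fun v => if 0 ≤ v then f v.toNat else 0 with hg
  have gnat : ∀ n : ℕ, g (n : ℤ) = f n := by
    intro n; simp [hg]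
  have gneg : ∀ v : ℤ, v < 0 → g v = 0 := by
    intro v hv; simp [hg, not_le.2 hv]
  have gc : ∀ v w : ℤ, v = w → g v = g w := fun _ _ h => by rw [h]
  have grec : ∀ n : ℕ, g ((n : ℤ) + 1) = ∑ i ∈ Finset.Icc 1 (m + 3), a i * g ((n : ℤ) + 1 - i) := by
    intro n
    have h1 : g ((n : ℤ) + 1) = f (n + 1) := by
      rw [show (n : ℤ) + 1 = ((n + 1 : ℕ) : ℤ) by push_cast; ring, gnat]
    rw [h1, hf (n + 1) (by omega)]
    refine Finset.sum_congr rfl ?_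
    intro i hi
    simp only [Finset.mem_Icc] at hi
    by_cases h : i ≤ n + 1
    · rw [if_pos h, show (n : ℤ) + 1 - i = ((n + 1 - i : ℕ) : ℤ) by omega, gnat]
    · rw [if_neg h, gneg _ (by omega)]
  have r_eq : ∀ i, 2 ≤ i → i ≤ m + 3 → r i = s i + q i * a 1 := by
    intro i h1 h2
    obtain ⟨hle, hgt⟩ := hqr i h1 h2
    rcases le_or_gt (s i) 0 with h | h
    · have := (hle h).2.2; linarith
    · obtain ⟨hq, hr⟩ := hgt h; rw [hq, hr]; ring
  have key : ∀ n : ℕ,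
      (∀ i : ℕ, 2 ≤ i → i ≤ m + 2 → R i n = g ((n : ℤ) - i + 1) - g ((n : ℤ) - i)) ∧
      R (m + 3) n = g ((n : ℤ) - (m + 3) + 1) ∧
      Z n = (∑ i ∈ Finset.Icc 2 (m + 3), q i * R i n) ∧
      A n + Z n = g (n : ℤ) - g ((n : ℤ) - 1) := by
    intro n
    induction n with
    | zero =>
      refine ⟨?_, ?_, ?_, ?_⟩
      · intro i h1 h2
        rw [hR0 i h1 (by omega), gneg _ (by omega), gneg _ (by omega)]; ring
      · rw [hR0 (m + 3) (by omega) (by omega), gneg _ (by omega)]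
      · rw [hZ0, Finset.sum_eq_zero]
        intro i hi
        simp only [Finset.mem_Icc] at hi
        rw [hR0 i hi.1 hi.2]; ring
      · rw [hA0, hZ0]
        have h1 := gnat 0
        have h2 : g (((0 : ℕ) : ℤ) - 1) = 0 := gneg _ (by norm_num)
        rw [h1, h2, hf0]
        ring
    | succ n ih =>
      obtain ⟨ih1, ih2, ih3, ih4⟩ := ih
      set x : ℕ → ℤ := fun i => g ((n : ℤ) + 1 - (i : ℤ)) with hx
      have hx1 : ∀ i : ℕ, 2 ≤ i → i ≤ m + 2 → R i n = x i - x (i + 1) := by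
        intro i h1 h2
        rw [ih1 i h1 h2]
        simp only [hx]
        push_cast
        try ring_nf
      have hxk : R (m + 3) n = x (m + 3) := by
        rw [ih2]
        simp only [hx]
        push_cast
        try ring_nf
      have hR2n : R 2 (n + 1) = x 1 - x 2 := by
        rw [hR2 n, ← ih3, ih4]
        simp only [hx]
        push_cast
        try ring_nf
      refine ⟨?_, ?_, ?_, ?_⟩
      · -- I1
        intro i h1 h2
        rcases Nat.lt_or_ge i 3 with h3 | h3
        · have hi2 : i = 2 := by omega
          subst hi2
          rw [hR2n]
          simp only [hx]
          push_cast
          try ring_nf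
        · have hm1 : R ((i - 1) + 1) (n + 1) = R (i - 1) n := hRmid n (i - 1) (by omega) (by omega)
          rw [show (i - 1) + 1 = i by omega] at hm1
          rw [hm1, ih1 (i - 1) (by omega) (by omega)]
          push_cast [Nat.cast_sub (show 1 ≤ i by omega)]
          ring_nf
      · -- I2
        rw [hRk n, ih2, ih1 (m + 2) (by omega) (by omega)]
        push_cast
        try ring_nf
      · -- I3
        have hmid : (∑ i ∈ Finset.Icc 3 (m + 2), q i * R i (n + 1))
            = ∑ i ∈ Finset.Icc 2 (m + 1), q (i + 1) * R i n := by
          rw [shift_aux2 (fun i => q i * R i (n + 1)) (show (3:ℕ) = 2 + 1 by omega)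
            (show m + 2 = (m + 1) + 1 by omega)]
          refine Finset.sum_congr rfl ?_
          intro i hi
          simp only [Finset.mem_Icc] at hi
          rw [hRmid n i hi.1 hi.2]
        have hsplit : (∑ i ∈ Finset.Icc 2 (m + 3), q i * R i (n + 1))
            = q 2 * R 2 (n + 1) + (∑ i ∈ Finset.Icc 2 (m + 1), q (i + 1) * R i n)
              + q (m + 3) * R (m + 3) (n + 1) := by
          rw [sum_Icc_top' (fun i => q i * R i (n + 1)) (show 2 ≤ m + 3 by omega)
            (show m + 3 = (m + 2) + 1 by omega),
            sum_Icc_bot2 (fun i => q i * R i (n + 1)) (show 2 ≤ m + 2 by omega)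
            (show (3:ℕ) = 2 + 1 by omega), hmid]
          try ring
        have e1 : (∑ i ∈ Finset.Icc 2 (m + 2), (q i * q 2 + q (i + 1)) * R i n)
            = q 2 * (∑ i ∈ Finset.Icc 2 (m + 2), q i * R i n)
              + ∑ i ∈ Finset.Icc 2 (m + 2), q (i + 1) * R i n := by
          rw [Finset.mul_sum, ← Finset.sum_add_distrib]
          exact Finset.sum_congr rfl fun i _ => by ring
        have e2 : (∑ i ∈ Finset.Icc 2 (m + 2), q (i + 1) * R i n)
            = (∑ i ∈ Finset.Icc 2 (m + 1), q (i + 1) * R i n) + q (m + 3) * R (m + 2) n := by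
          rw [sum_Icc_top' (fun i => q (i + 1) * R i n) (show 2 ≤ m + 2 by omega)
            (show m + 2 = (m + 1) + 1 by omega)]
          try norm_num
        have e3 : (∑ i ∈ Finset.Icc 2 (m + 3), q i * R i n)
            = (∑ i ∈ Finset.Icc 2 (m + 2), q i * R i n) + q (m + 3) * R (m + 3) n :=
          sum_Icc_top' (fun i => q i * R i n) (by omega) (by omega)
        rw [hZ n, hsplit, hR2 n, hRk n, e1, e2, e3]
        ring
      · -- I4
        have hS : (∑ i ∈ Finset.Icc 2 (m + 3), q i * R i n)
            = (∑ i ∈ Finset.Icc 2 (m + 2), q i * (x i - x (i + 1))) + q (m + 3) * x (m + 3) := by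
          rw [sum_Icc_top' (fun i => q i * R i n) (show 2 ≤ m + 3 by omega)
            (show m + 3 = (m + 2) + 1 by omega), hxk]
          congr 1
          exact Finset.sum_congr rfl fun i hi => by
            simp only [Finset.mem_Icc] at hi
            rw [hx1 i hi.1 hi.2]
        have hAn : A n = (x 1 - x 2)
            - ((∑ i ∈ Finset.Icc 2 (m + 2), q i * (x i - x (i + 1))) + q (m + 3) * x (m + 3)) := by
          have h1 : A n = (g (n : ℤ) - g ((n : ℤ) - 1)) - Z n := by linarith [ih4]
          have e1 : g ((n : ℤ)) = x 1 := by simp only [hx]; push_cast; try ring_nf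
          have e2 : g ((n : ℤ) - 1) = x 2 := by simp only [hx]; push_cast; try ring_nf
          rw [h1, ih3, hS, e1, e2]
        have hsum1 : (∑ i ∈ Finset.Icc 2 (m + 2), (r i - q i * (q 2 + 1) - q (i + 1) - 1) * R i n)
              + (∑ i ∈ Finset.Icc 2 (m + 2), (q i * q 2 + q (i + 1)) * R i n)
            = (∑ i ∈ Finset.Icc 2 (m + 2), s i * (x i - x (i + 1)))
              + (a 1 - 1) * (∑ i ∈ Finset.Icc 2 (m + 2), q i * (x i - x (i + 1)))
              - (∑ i ∈ Finset.Icc 2 (m + 2), (x i - x (i + 1))) := by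
          rw [← Finset.sum_add_distrib, Finset.mul_sum, ← Finset.sum_add_distrib,
            ← Finset.sum_sub_distrib]
          refine Finset.sum_congr rfl ?_
          intro i hi
          simp only [Finset.mem_Icc] at hi
          rw [hx1 i hi.1 hi.2, r_eq i hi.1 (by omega)]
          ring
        have hT3 : (∑ i ∈ Finset.Icc 2 (m + 2), (x i - x (i + 1))) = x 2 - x (m + 3) :=
          tele_aux2 x (m := m + 2) (t := m + 3) (by omega) (by omega)
        have hg1 : (∑ i ∈ Finset.Icc 1 (m + 3), a i * g ((n : ℤ) + 1 - i))
            = ∑ i ∈ Finset.Icc 1 (m + 3), a i * x i := by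
          refine Finset.sum_congr rfl fun i _ => ?_
          simp only [hx]
        have habel : g ((n : ℤ) + 1)
            = a 1 * (x 1 - x 2) + (∑ i ∈ Finset.Icc 2 (m + 2), s i * (x i - x (i + 1)))
              + s (m + 3) * x (m + 3) := by
          rw [grec n, hg1, abel_aux' a x (m + 3) (by omega),
            show m + 3 - 1 = m + 2 by omega,
            sum_Icc_bot2 (fun i => (∑ l ∈ Finset.Icc 1 i, a l) * (x i - x (i + 1)))
              (show 1 ≤ m + 2 by omega) (show (2:ℕ) = 1 + 1 by omega), ← hs (m + 3)]
          have h11 : (∑ l ∈ Finset.Icc 1 1, a l) = a 1 := by simp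
          rw [h11]
          have h12 : (∑ i ∈ Finset.Icc 2 (m + 2), (∑ l ∈ Finset.Icc 1 i, a l) * (x i - x (i + 1)))
              = ∑ i ∈ Finset.Icc 2 (m + 2), s i * (x i - x (i + 1)) :=
            Finset.sum_congr rfl fun i _ => by rw [hs i]
          rw [h12]
          try norm_num
        have hcast1 : g ((((n + 1 : ℕ)) : ℤ)) = g ((n : ℤ) + 1) := gc _ _ (by push_cast; ring)
        have hcast2 : g ((((n + 1 : ℕ)) : ℤ) - 1) = x 1 := by
          simp only [hx]; push_cast; try ring_nf
        rw [hA n, hZ n, hAn, hxk, r_eq (m + 3) (by omega) (by omega), hcast1, hcast2]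
        linear_combination hsum1 - hT3 - habel
  intro n
  obtain ⟨ih1, ih2, ih3, ih4⟩ := key n
  set X : ℕ → ℤ := fun i => g ((n : ℤ) + 1 - (i : ℤ)) with hX
  have hsum : (∑ i ∈ Finset.Icc 2 (m + 3), R i n) = g ((n : ℤ) - 1) := by
    rw [sum_Icc_top' (fun i => R i n) (show 2 ≤ m + 3 by omega)
      (show m + 3 = (m + 2) + 1 by omega), ih2]
    have h1 : (∑ i ∈ Finset.Icc 2 (m + 2), R i n)
        = ∑ i ∈ Finset.Icc 2 (m + 2), (X i - X (i + 1)) := by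
      refine Finset.sum_congr rfl fun i hi => ?_
      simp only [Finset.mem_Icc] at hi
      rw [ih1 i hi.1 hi.2]
      simp only [hX]
      push_cast
      try ring_nf
    rw [h1, tele_aux2 X (m := m + 2) (t := m + 3) (by omega) (by omega)]
    simp only [hX]
    push_cast
    ring_nf
  rw [hsum, ← gnat n]
  linarith [ih4]
end

section
/- (Positivity condition.) Let k ≥ 2 and let a_1 > 0, a_2,…,a_k be integers, with s_i = a_1 + … + a_i, and let f be the C-finite sequence with coefficients a_1,…,a_k and default initial conditions. Suppose that for each 2 ≤ i ≤ k there are integers q_i, r_i such that: if s_i ≤ 0 then q_i > 0, r_i > 0 and −s_i = q_i·a_1 − r_i; otherwise q_i = 0 and r_i = s_i. If moreover a_1 − (q_2 + 1) ≥ 0, r_i − (q_i(q_2+1) + q_{i+1} + 1) ≥ 0 for every 2 ≤ i ≤ k−1, and r_k − (q_k(q_2+1) + q_k + 1) ≥ 0, then f_n > 0 for all n ≥ 0. -/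
/-- Positivity condition: if the system of inequalities (16) of the paper holds, then all
terms of the C-finite sequence with coefficients `a₁, …, a_k` and default initial
conditions are positive. -/
theorem stmt_3 (k : ℕ) (hk : 2 ≤ k) (a : ℕ → ℤ) (ha1 : 0 < a 1)
    (s : ℕ → ℤ) (hs : ∀ i, s i = ∑ l ∈ Finset.Icc 1 i, a l)
    (f : ℕ → ℤ) (hf0 : f 0 = 1)
    (hf : ∀ n : ℕ, 1 ≤ n →
      f n = ∑ i ∈ Finset.Icc 1 k, a i * (if i ≤ n then f (n - i) else 0))
    (q r : ℕ → ℤ)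
    (hqr : ∀ i, 2 ≤ i → i ≤ k →
      (s i ≤ 0 → 0 < q i ∧ 0 < r i ∧ -(s i) = q i * a 1 - r i) ∧
      (0 < s i → q i = 0 ∧ r i = s i))
    (h1 : 0 ≤ a 1 - (q 2 + 1))
    (hmid : ∀ i, 2 ≤ i → i ≤ k - 1 → 0 ≤ r i - (q i * (q 2 + 1) + q (i + 1) + 1))
    (hlast : 0 ≤ r k - (q k * (q 2 + 1) + q k + 1)) :
    ∀ n : ℕ, 0 < f n := by
  classical
  obtain ⟨k', rfl⟩ : ∃ k', k = k' + 2 := ⟨k - 2, by omega⟩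
  have hq0 : ∀ i, 2 ≤ i → i ≤ k' + 2 → 0 ≤ q i := by
    intro i h2 hik
    rcases le_or_gt (s i) 0 with h | h
    · exact le_of_lt ((hqr i h2 hik).1 h).1
    · rw [((hqr i h2 hik).2 h).1]
  have hsrq : ∀ i, 2 ≤ i → i ≤ k' + 2 → s i = r i - q i * a 1 := by
    intro i h2 hik
    rcases le_or_gt (s i) 0 with h | h
    · have := ((hqr i h2 hik).1 h).2.2; linarith
    · obtain ⟨hq', hr'⟩ := (hqr i h2 hik).2 h; rw [hq', hr']; ring
  have hs0 : s 0 = 0 := by simp [hs]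
  have hs1 : s 1 = a 1 := by simp [hs]
  have hsa : ∀ i : ℕ, a (i + 1) = s (i + 1) - s i := by
    intro i
    rw [hs, hs, Finset.sum_Icc_succ_top (by omega : 1 ≤ i + 1)]
    ring
  set F : ℤ → ℤ := fun m => if 0 ≤ m then f m.toNat else 0 with hFdef
  have hFneg : ∀ m : ℤ, m < 0 → F m = 0 := by
    intro m hm; simp only [hFdef]; rw [if_neg (by omega)]
  have hFnat : ∀ n : ℕ, F (n : ℤ) = f n := by
    intro n; simp only [hFdef]; rw [if_pos (by omega)]; simp
  have hF0 : F 0 = 1 := by simpa [hf0] using hFnat 0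
  have hFrec : ∀ n : ℤ, 1 ≤ n →
      F n = ∑ i ∈ Finset.Icc 1 (k' + 2), a i * F (n - (i : ℤ)) := by
    intro n hn
    obtain ⟨m, rfl⟩ : ∃ m : ℕ, n = (m : ℤ) := ⟨n.toNat, by omega⟩
    have hm : 1 ≤ m := by exact_mod_cast hn
    rw [hFnat, hf m hm]
    refine Finset.sum_congr rfl fun i _ => ?_
    by_cases h : i ≤ m
    · rw [if_pos h]
      have h1' : (0:ℤ) ≤ (m:ℤ) - (i:ℤ) := by omega
      have h2' : ((m:ℤ) - (i:ℤ)).toNat = m - i := by omega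
      simp only [hFdef]
      rw [if_pos h1', h2']
    · rw [if_neg h, hFneg _ (by omega), mul_zero]
  set D : ℤ → ℤ := fun m => F m - F (m - 1) with hDdef
  have hDval : ∀ m : ℤ, D m = F m - F (m - 1) := fun m => rfl
  have hDneg : ∀ m : ℤ, m < 0 → D m = 0 := by
    intro m hm; rw [hDval, hFneg m hm, hFneg (m-1) (by omega), sub_zero]
  have hD0 : D 0 = 1 := by
    rw [hDval, hF0, hFneg (0-1) (by norm_num)]; ring
  have TEL : ∀ (t : ℕ) (m : ℤ), F m = F (m - t) + ∑ i ∈ Finset.range t, D (m - i) := by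
    intro t
    induction t with
    | zero => intro m; simp
    | succ t ih =>
      intro m
      rw [Finset.sum_range_succ, ih m]
      have h1 : D (m - t) = F (m - t) - F (m - (t+1 : ℕ)) := by
        rw [hDval]; congr 1; push_cast; ring
      rw [h1]; ring
  have ABEL : ∀ n : ℤ, ∑ i ∈ Finset.Icc 1 (k' + 2), a i * F (n - (i : ℤ))
      = (∑ i ∈ Finset.Icc 1 (k' + 2), s i * D (n - (i : ℤ)))
        + s (k' + 2) * F (n - ((k' + 2 : ℕ) : ℤ) - 1) := by
    intro n
    have key : ∑ i ∈ Finset.Icc 1 (k' + 2), (a i * F (n - (i : ℤ)) - s i * D (n - (i : ℤ)))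
        = s (k' + 2) * F (n - ((k' + 2 : ℕ) : ℤ) - 1) := by
      have h1 : ∑ i ∈ Finset.Icc 1 (k' + 2), (a i * F (n - (i : ℤ)) - s i * D (n - (i : ℤ)))
          = ∑ i ∈ Finset.range (k' + 2),
              ((fun j : ℕ => s j * F (n - (j : ℤ) - 1)) (i + 1)
                - (fun j : ℕ => s j * F (n - (j : ℤ) - 1)) i) := by
        rw [← Finset.Ico_add_one_right_eq_Icc, Finset.sum_Ico_eq_sum_range]
        refine Finset.sum_congr (by norm_num) ?_
        intro i _
        have hi1 : 1 + i = i + 1 := by omega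
        simp only [hi1, hsa i, hDval]
        push_cast
        ring_nf
      rw [h1, Finset.sum_range_sub (fun j : ℕ => s j * F (n - (j : ℤ) - 1))]
      simp [hs0]
    rw [Finset.sum_sub_distrib] at key
    linarith
  have hins2 : Finset.Icc 1 (k' + 1) = insert 1 (Finset.Icc 2 (k' + 1)) := by
    ext x; simp only [Finset.mem_Icc, Finset.mem_insert]; omega
  have KEYID : ∀ n : ℤ, 1 ≤ n → F n = a 1 * D (n - 1)
      + (∑ i ∈ Finset.Icc 2 (k' + 1), s i * D (n - (i : ℤ)))
      + s (k' + 2) * F (n - ((k' + 2 : ℕ) : ℤ)) := by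
    intro n hn
    rw [hFrec n hn, ABEL n,
      Finset.sum_Icc_succ_top (by omega : 1 ≤ k' + 1 + 1) (fun i : ℕ => s i * D (n - (i : ℤ))),
      hins2, Finset.sum_insert (by simp)]
    rw [hs1]
    have hD2 : D (n - ((k' + 1 + 1 : ℕ) : ℤ))
        = F (n - ((k' + 2 : ℕ) : ℤ)) - F (n - ((k' + 2 : ℕ) : ℤ) - 1) := by
      rw [hDval]
    rw [hD2]
    push_cast
    ring
  have hq2 : 0 ≤ q 2 := hq0 2 (by omega) (by omega)
  have hf1 : f 1 = a 1 := by
    rw [hf 1 le_rfl, Finset.sum_eq_single 1]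
    · simp [hf0]
    · intro i hi hne
      have h2 : ¬ i ≤ 1 := by
        simp only [Finset.mem_Icc] at hi; omega
      rw [if_neg h2, mul_zero]
    · intro h; exact absurd (by simp : 1 ∈ Finset.Icc 1 (k' + 2)) h
  have MAIN : ∀ n : ℕ, 0 ≤ D (n : ℤ) ∧
      a 1 * D ((n : ℤ) - 1) ≤ (q 2 + 1) * D ((n : ℤ) - 1) + D (n : ℤ) ∧
      a 1 * F ((n : ℤ) - 1) ≤ (q 2 + 1) * F ((n : ℤ) - 1) + F (n : ℤ) ∧ 1 ≤ F (n : ℤ) := by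
    intro n
    induction n using Nat.strong_induction_on with
    | _ n IH =>
      rcases n with _ | n
      · -- n = 0
        simp only [Nat.cast_zero]
        have hDm1 : D (0 - 1 : ℤ) = 0 := hDneg _ (by norm_num)
        have hFm1 : F (0 - 1 : ℤ) = 0 := hFneg _ (by norm_num)
        exact ⟨by rw [hD0]; norm_num,
               by rw [hDm1, hD0]; linarith,
               by rw [hFm1, hF0]; linarith,
               by rw [hF0]⟩
      rcases n with _ | m
      · -- n = 1
        have hcast : ((0 + 1 : ℕ) : ℤ) = 1 := by norm_num
        rw [hcast]
        have hF1 : F 1 = a 1 := by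
          rw [show (1:ℤ) = ((1:ℕ):ℤ) by norm_num, hFnat 1, hf1]
        have hD1 : D 1 = a 1 - 1 := by rw [hDval, hF1]; norm_num [hF0]
        have hDm : D (1 - 1 : ℤ) = 1 := by norm_num [hD0]
        have hFm : F (1 - 1 : ℤ) = 1 := by norm_num [hF0]
        exact ⟨by rw [hD1]; linarith,
               by rw [hDm, hD1]; linarith,
               by rw [hFm, hF1]; linarith,
               by rw [hF1]; linarith⟩
      · -- n = m + 2
        have hcast : ((m + 1 + 1 : ℕ) : ℤ) = (m : ℤ) + 2 := by push_cast; ring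
        rw [hcast]
        have HDnn : ∀ x : ℤ, x < (m : ℤ) + 2 → 0 ≤ D x := by
          intro x hx
          rcases lt_or_ge x 0 with h | h
          · rw [hDneg x h]
          · obtain ⟨y, rfl⟩ : ∃ y : ℕ, x = (y : ℤ) := ⟨x.toNat, by omega⟩
            exact (IH y (by omega)).1
        have HFnn : ∀ x : ℤ, x < (m : ℤ) + 2 → 0 ≤ F x := by
          intro x hx
          rcases lt_or_ge x 0 with h | h
          · rw [hFneg x h]
          · obtain ⟨y, rfl⟩ : ∃ y : ℕ, x = (y : ℤ) := ⟨x.toNat, by omega⟩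
            have := (IH y (by omega)).2.2.2
            linarith
        have HD : ∀ x : ℤ, x < (m : ℤ) + 2 →
            a 1 * D (x - 1) ≤ (q 2 + 1) * D (x - 1) + D x := by
          intro x hx
          rcases lt_or_ge x 0 with h | h
          · rw [hDneg x h, hDneg (x - 1) (by omega)]; norm_num
          · obtain ⟨y, rfl⟩ : ∃ y : ℕ, x = (y : ℤ) := ⟨x.toNat, by omega⟩
            exact (IH y (by omega)).2.1
        have HF : ∀ x : ℤ, x < (m : ℤ) + 2 →
            a 1 * F (x - 1) ≤ (q 2 + 1) * F (x - 1) + F x := by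
          intro x hx
          rcases lt_or_ge x 0 with h | h
          · have hx0 : F x = 0 := hFneg x h
            rw [hx0, hFneg (x - 1) (by omega)]; norm_num
          · obtain ⟨y, rfl⟩ : ∃ y : ℕ, x = (y : ℤ) := ⟨x.toNat, by omega⟩
            exact (IH y (by omega)).2.2.1
        have B : ∀ t : ℕ, t ≤ k' → ∀ j : ℕ, j + t = k' + 2 →
            (∑ i ∈ Finset.Icc j (k' + 1), D ((m : ℤ) + 2 - (i : ℤ)))
              + F ((m : ℤ) + 2 - ((k' + 2 : ℕ) : ℤ))
              - q j * D ((m : ℤ) + 2 - (j : ℤ) + 1)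
            ≤ (∑ i ∈ Finset.Icc j (k' + 1), s i * D ((m : ℤ) + 2 - (i : ℤ)))
              + s (k' + 2) * F ((m : ℤ) + 2 - ((k' + 2 : ℕ) : ℤ)) := by
          intro t
          induction t with
          | zero =>
            intro _ j hj
            obtain rfl : j = k' + 2 := by omega
            rw [Finset.Icc_eq_empty (by omega), Finset.sum_empty, Finset.sum_empty]
            have hsk := hsrq (k' + 2) (by omega) le_rfl
            have hqk := hq0 (k' + 2) (by omega) le_rfl
            have hFk : 0 ≤ F ((m : ℤ) + 2 - ((k' + 2 : ℕ) : ℤ)) :=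
              HFnn _ (by push_cast; omega)
            have hHF := HF ((m : ℤ) + 2 - ((k' + 2 : ℕ) : ℤ) + 1) (by push_cast; omega)
            have e1 : (m : ℤ) + 2 - ((k' + 2 : ℕ) : ℤ) + 1 - 1
                = (m : ℤ) + 2 - ((k' + 2 : ℕ) : ℤ) := by ring
            rw [e1] at hHF
            have e2 : F ((m : ℤ) + 2 - ((k' + 2 : ℕ) : ℤ) + 1)
                = F ((m : ℤ) + 2 - ((k' + 2 : ℕ) : ℤ))
                  + D ((m : ℤ) + 2 - ((k' + 2 : ℕ) : ℤ) + 1) := by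
              rw [hDval, e1]; ring
            rw [e2] at hHF
            rw [hsk]
            nlinarith [mul_le_mul_of_nonneg_left hHF hqk,
              mul_le_mul_of_nonneg_right hlast hFk]
          | succ t ih =>
            intro ht j hj
            have hj2 : 2 ≤ j := by omega
            have hjk : j ≤ k' + 1 := by omega
            have hIH := ih (by omega) (j + 1) (by omega)
            have hins : Finset.Icc j (k' + 1) = insert j (Finset.Icc (j + 1) (k' + 1)) := by
              ext x; simp only [Finset.mem_Icc, Finset.mem_insert]; omega
            rw [hins, Finset.sum_insert (by simp), Finset.sum_insert (by simp)]
            have hHD := HD ((m : ℤ) + 2 - (j : ℤ) + 1) (by omega)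
            have e1 : (m : ℤ) + 2 - (j : ℤ) + 1 - 1 = (m : ℤ) + 2 - (j : ℤ) := by ring
            rw [e1] at hHD
            have e2 := hmid j hj2 (by omega : j ≤ k' + 2 - 1)
            have e3 := hsrq j hj2 (by omega)
            have hqj := hq0 j hj2 (by omega)
            have hDj : 0 ≤ D ((m : ℤ) + 2 - (j : ℤ)) := HDnn _ (by omega)
            have e4 : (1 + q (j + 1)) * D ((m : ℤ) + 2 - (j : ℤ))
                - q j * D ((m : ℤ) + 2 - (j : ℤ) + 1)
                ≤ s j * D ((m : ℤ) + 2 - (j : ℤ)) := by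
              rw [e3]
              nlinarith [mul_le_mul_of_nonneg_left hHD hqj,
                mul_le_mul_of_nonneg_right e2 hDj]
            have e5 : (m : ℤ) + 2 - ((j + 1 : ℕ) : ℤ) + 1 = (m : ℤ) + 2 - (j : ℤ) := by
              push_cast; ring
            rw [e5] at hIH
            linarith
        have hB := B k' le_rfl 2 (by omega)
        have hKEY := KEYID ((m : ℤ) + 2) (by omega)
        have hTEL := TEL (k' + 1) ((m : ℤ) + 2 - 1)
        have hconv : ∑ i ∈ Finset.Icc 1 (k' + 1), D ((m : ℤ) + 2 - (i : ℤ))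
            = ∑ i ∈ Finset.range (k' + 1), D ((m : ℤ) + 2 - 1 - (i : ℤ)) := by
          rw [← Finset.Ico_add_one_right_eq_Icc, Finset.sum_Ico_eq_sum_range]
          refine Finset.sum_congr (by norm_num) fun i _ => ?_
          congr 1; push_cast; ring
        have hsplit : ∑ i ∈ Finset.Icc 1 (k' + 1), D ((m : ℤ) + 2 - (i : ℤ))
            = D ((m : ℤ) + 2 - ((1 : ℕ) : ℤ))
              + ∑ i ∈ Finset.Icc 2 (k' + 1), D ((m : ℤ) + 2 - (i : ℤ)) := by
          rw [hins2, Finset.sum_insert (by simp)]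
        have hc1 : (m : ℤ) + 2 - ((1 : ℕ) : ℤ) = (m : ℤ) + 2 - 1 := by norm_num
        rw [hc1] at hsplit
        have hc2 : (m : ℤ) + 2 - 1 - ((k' + 1 : ℕ) : ℤ) = (m : ℤ) + 2 - ((k' + 2 : ℕ) : ℤ) := by
          push_cast; ring
        rw [hc2] at hTEL
        have hc3 : (m : ℤ) + 2 - ((2 : ℕ) : ℤ) + 1 = (m : ℤ) + 2 - 1 := by push_cast; ring
        rw [hc3] at hB
        have hDN : D ((m : ℤ) + 2) = F ((m : ℤ) + 2) - F ((m : ℤ) + 2 - 1) := hDval _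
        have hDprev : 0 ≤ D ((m : ℤ) + 2 - 1) := HDnn _ (by omega)
        have hexp : (a 1 - q 2 - 1) * D ((m : ℤ) + 2 - 1)
            = a 1 * D ((m : ℤ) + 2 - 1) - q 2 * D ((m : ℤ) + 2 - 1)
              - D ((m : ℤ) + 2 - 1) := by ring
        have hkey2 : (a 1 - q 2 - 1) * D ((m : ℤ) + 2 - 1) ≤ D ((m : ℤ) + 2) := by
          linarith [hKEY, hB, hTEL, hconv, hsplit, hexp, hDN]
        have hDNnn : 0 ≤ D ((m : ℤ) + 2) := by
          have := mul_nonneg (by linarith : (0:ℤ) ≤ a 1 - q 2 - 1) hDprev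
          linarith
        have hstep2 : a 1 * D ((m : ℤ) + 2 - 1)
            ≤ (q 2 + 1) * D ((m : ℤ) + 2 - 1) + D ((m : ℤ) + 2) := by
          have hexp2 : (a 1 - q 2 - 1) * D ((m : ℤ) + 2 - 1)
              = a 1 * D ((m : ℤ) + 2 - 1) - (q 2 + 1) * D ((m : ℤ) + 2 - 1) := by ring
          linarith [hkey2]
        have hFprev : 1 ≤ F ((m : ℤ) + 2 - 1) := by
          have h := (IH (m + 1) (by omega)).2.2.2
          have ec : ((m + 1 : ℕ) : ℤ) = (m : ℤ) + 2 - 1 := by push_cast; ring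
          rwa [ec] at h
        refine ⟨hDNnn, hstep2, ?_, ?_⟩
        · have hHFp := HF ((m : ℤ) + 2 - 1) (by omega)
          have e : (m : ℤ) + 2 - 1 - 1 = (m : ℤ) := by ring
          rw [e] at hHFp
          have hd1 : D ((m : ℤ) + 2 - 1) = F ((m : ℤ) + 2 - 1) - F ((m : ℤ)) := by
            have e' : (m : ℤ) + 2 - 1 - 1 = (m : ℤ) := by ring
            rw [hDval, e']
          have hx : a 1 * F ((m : ℤ) + 2 - 1)
              = a 1 * F ((m : ℤ)) + a 1 * D ((m : ℤ) + 2 - 1) := by rw [hd1]; ring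
          have hy : (q 2 + 1) * F ((m : ℤ) + 2 - 1)
              = (q 2 + 1) * F ((m : ℤ)) + (q 2 + 1) * D ((m : ℤ) + 2 - 1) := by
            rw [hd1]; ring
          linarith [hHFp, hstep2, hx, hy, hDN]
        · linarith [hDN, hFprev, hDNnn]
  intro n
  have := (MAIN n).2.2.2
  rw [hFnat n] at this
  linarith
end

section
/- Let a_1 > 0 and a_2 be integers. There exists an integer q_2 with 0 ≤ q_2 ≤ a_1 − 1 and q_2² + (2 − a_1)·q_2 + 1 − a_1 − a_2 ≤ 0 if and only if a_1² + 4·a_2 ≥ 0. -/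
/-- For a degree-2 recurrence with `a₁ > 0`, the positivity condition
`q₂² + (2 − a₁)q₂ + 1 − a₁ − a₂ ≤ 0` is satisfiable for some `0 ≤ q₂ ≤ a₁ − 1`
if and only if `a₁² + 4a₂ ≥ 0`. -/
theorem stmt_4 (a1 a2 : ℤ) (ha1 : 0 < a1) :
    (∃ q2 : ℤ, 0 ≤ q2 ∧ q2 ≤ a1 - 1 ∧
      q2 ^ 2 + (2 - a1) * q2 + 1 - a1 - a2 ≤ 0) ↔ a1 ^ 2 + 4 * a2 ≥ 0 := by
  constructor
  · rintro ⟨q2, _, _, hq⟩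
    nlinarith [sq_nonneg (2 * (q2 + 1) - a1)]
  · intro h
    rcases Int.even_or_odd a1 with ⟨k, hk⟩ | ⟨k, hk⟩
    · refine ⟨k - 1, by omega, by omega, ?_⟩
      subst hk
      nlinarith
    · refine ⟨k, by omega, by omega, ?_⟩
      subst hk
      have h4 : 4 * (k ^ 2 + k + a2) ≥ -1 := by nlinarith
      nlinarith [Int.le_of_lt (show -1 < k ^ 2 + k + a2 by omega)]
end

section
/- Let a_1 > 0 and a_2 be integers and let f : ℕ → ℤ be defined by f_0 = 1, f_1 = a_1, and f_n = a_1 f_{n−1} + a_2 f_{n−2} for n ≥ 2. Then f_n > 0 for all n ≥ 0 if and only if a_1² + 4·a_2 ≥ 0. -/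
/-- For the degree-2 C-finite sequence with `a₁ > 0` and default initial conditions,
all terms are positive if and only if `a₁² + 4a₂ ≥ 0`. -/
theorem stmt_5 (a1 a2 : ℤ) (ha1 : 0 < a1) (f : ℕ → ℤ)
    (hf0 : f 0 = 1) (hf1 : f 1 = a1)
    (hf : ∀ n : ℕ, f (n + 2) = a1 * f (n + 1) + a2 * f n) :
    (∀ n : ℕ, 0 < f n) ↔ a1 ^ 2 + 4 * a2 ≥ 0 := by
  constructor
  · intro hpos
    by_contra hD
    push_neg at hD
    have hD1 : a1 ^ 2 + 4 * a2 ≤ -1 := by omega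
    have key : ∀ n : ℕ, 4 * a1 * f (n + 1) ≤ (4 * a1 ^ 2 + (n : ℤ) * (a1 ^ 2 + 4 * a2)) * f n := by
      intro n
      induction n with
      | zero =>
        simp [hf0, hf1]
        nlinarith
      | succ n ih =>
        have h1 := hpos n
        have h2 := hpos (n + 1)
        have h3 := hf n
        have hn : (0 : ℤ) ≤ (n : ℤ) := Int.natCast_nonneg n
        have hd : 0 < -(a1 ^ 2 + 4 * a2) := by linarith
        have hw : 0 ≤ ((n : ℤ) + 1) * (-(a1 ^ 2 + 4 * a2)) :=
          mul_nonneg (by positivity) hd.le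
        have A := mul_le_mul_of_nonneg_left ih hw
        have scal : ((n : ℤ) + 1) * (-(a1 ^ 2 + 4 * a2)) * (4 * a1 ^ 2 + (n : ℤ) * (a1 ^ 2 + 4 * a2))
            ≤ 4 * a1 * (-4 * a1 * a2) := by
          nlinarith [sq_nonneg (2 * a1 ^ 2 + (n : ℤ) * (a1 ^ 2 + 4 * a2)),
            mul_nonneg hn (sq_nonneg (a1 ^ 2 + 4 * a2))]
        have B := mul_le_mul_of_nonneg_right scal h1.le
        have C : (4 * a1) * (((n : ℤ) + 1) * (-(a1 ^ 2 + 4 * a2)) * f (n + 1))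
            ≤ (4 * a1) * (-4 * a1 * a2 * f n) := by nlinarith [A, B]
        have H := le_of_mul_le_mul_left C (by positivity : (0 : ℤ) < 4 * a1)
        have h4 : f (n + 1 + 1) = a1 * f (n + 1) + a2 * f n := h3
        rw [h4]
        push_cast
        nlinarith [H]
    set N : ℕ := (4 * a1 ^ 2).toNat with hN
    have hNc : ((N : ℤ)) = 4 * a1 ^ 2 := Int.toNat_of_nonneg (by positivity)
    have h := key N
    rw [hNc] at h
    have hfN := hpos N
    have hfN1 := hpos (N + 1)
    have hrhs : (0 : ℤ) ≤ 4 * a1 ^ 2 * (-(1 + (a1 ^ 2 + 4 * a2))) := by nlinarith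
    nlinarith [mul_nonneg hrhs hfN.le, mul_pos ha1 hfN1]
  · intro hD n
    have key : ∀ n : ℕ, 0 < f n ∧ a1 * f n ≤ 2 * f (n + 1) := by
      intro n
      induction n with
      | zero =>
        refine ⟨by simp [hf0], ?_⟩
        simp [hf0, hf1]
        linarith
      | succ n ih =>
        obtain ⟨h1, h2⟩ := ih
        have h3 : 0 < f (n + 1) := by nlinarith
        refine ⟨h3, ?_⟩
        rw [hf n]
        nlinarith
    exact (key n).1
end

section
/- Let k ≥ 2, let a_1,…,a_k be integers, and let h_1,…,h_{k−1} be integers. Let f : ℕ → ℤ satisfy f_0 = 1, f_i = h_i for 1 ≤ i ≤ k−1, and f_n = Σ_{i=1}^{k} a_i f_{n−i} for n ≥ k. Define c : ℕ → ℤ by c_1 = h_1; c_i = h_i − Σ_{j=1}^{i−1} h_j·a_{i−j} for 2 ≤ i ≤ k−1; c_k = a_k; and c_n = 0 for n = 0 and n > k. Define g : ℕ → ℤ (the net number of (a_1)-labelled nodes at each level of the generating tree of the extended succession rule in which the root, labelled (h_1), produces c_i copies of (a_1) at level i for 1 ≤ i ≤ k, and every (a_1)-node at level n produces a_i copies of (a_1)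 at level n+i for 1 ≤ i ≤ k, negative multiplicities being marked labels counted with sign) by g_0 = 0 and, for n ≥ 1, g_n = c_n + Σ_{i=1}^{k} a_i·g_{n−i}, where any g_m with m < 0 is taken to be 0. Then g_n = f_n for every n ≥ 1. -/
/-- Generic initial conditions: the net number `g` of `(a₁)`-labelled nodes per level of
the extended succession rule (17) of the paper equals the C-finite sequence `f` with
coefficients `a₁, …, a_k` and initial conditions `f₀ = 1`, `f_i = h_i`. -/
theorem stmt_6 (k : ℕ) (hk : 2 ≤ k) (a h : ℕ → ℤ)
    (f : ℕ → ℤ) (hf0 : f 0 = 1)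
    (hfi : ∀ i, 1 ≤ i → i ≤ k - 1 → f i = h i)
    (hf : ∀ n : ℕ, k ≤ n → f n = ∑ i ∈ Finset.Icc 1 k, a i * f (n - i))
    (c : ℕ → ℤ) (hc0 : c 0 = 0) (hc1 : c 1 = h 1)
    (hci : ∀ i, 2 ≤ i → i ≤ k - 1 →
      c i = h i - ∑ j ∈ Finset.Icc 1 (i - 1), h j * a (i - j))
    (hck : c k = a k)
    (hcbig : ∀ n : ℕ, k < n → c n = 0)
    (g : ℕ → ℤ) (hg0 : g 0 = 0)
    (hg : ∀ n : ℕ, 1 ≤ n →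
      g n = c n + ∑ i ∈ Finset.Icc 1 k, a i * (if i ≤ n then g (n - i) else 0)) :
    ∀ n : ℕ, 1 ≤ n → g n = f n := by
  intro n hn
  induction n using Nat.strong_induction_on with
  | _ n ih =>
  rcases lt_trichotomy n k with hnk | rfl | hnk
  · -- n < k
    have hsum : ∑ i ∈ Finset.Icc 1 k, a i * (if i ≤ n then g (n - i) else 0)
        = ∑ i ∈ Finset.Icc 1 (n - 1), a i * h (n - i) := by
      rw [show Finset.Icc 1 (n - 1) = (Finset.Icc 1 k).filter (· < n) by
        ext i; simp only [Finset.mem_Icc, Finset.mem_filter]; omega, Finset.sum_filter]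
      apply Finset.sum_congr rfl
      intro i hi
      simp only [Finset.mem_Icc] at hi
      by_cases h1 : i < n
      · have h3 : 1 ≤ n - i := by omega
        rw [if_pos (by omega : i ≤ n), if_pos h1, ih (n - i) (by omega) h3,
          hfi (n - i) h3 (by omega)]
      · by_cases h2 : i ≤ n
        · rw [if_pos h2, if_neg h1, show n - i = 0 by omega, hg0, mul_zero]
        · rw [if_neg h2, if_neg h1, mul_zero]
    rw [hg n hn, hsum]
    rcases eq_or_lt_of_le hn with h1 | h2
    · rw [← h1]
      simp [hc1, hfi 1 le_rfl (by omega)]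
    · rw [hci n h2 (by omega), hfi n hn (by omega)]
      have hre : ∑ i ∈ Finset.Icc 1 (n - 1), a i * h (n - i)
          = ∑ j ∈ Finset.Icc 1 (n - 1), h j * a (n - j) := by
        apply Finset.sum_nbij' (fun i => n - i) (fun j => n - j)
        · intro i hi; simp only [Finset.mem_Icc] at *; omega
        · intro i hi; simp only [Finset.mem_Icc] at *; omega
        · intro i hi; simp only [Finset.mem_Icc] at hi; omega
        · intro i hi; simp only [Finset.mem_Icc] at hi; omega
        · intro i hi; simp only [Finset.mem_Icc] at hi
          rw [show n - (n - i) = i by omega, mul_comm]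
      rw [hre]; ring
  · -- n = k
    obtain ⟨m, rfl⟩ : ∃ m, n = m + 1 := ⟨n - 1, by omega⟩
    rw [hg (m + 1) (by omega), hck, hf (m + 1) le_rfl,
      Finset.sum_Icc_succ_top (by omega : 1 ≤ m + 1),
      Finset.sum_Icc_succ_top (by omega : 1 ≤ m + 1)]
    rw [show m + 1 - (m + 1) = 0 by omega, hg0, hf0, if_pos le_rfl, mul_zero, mul_one]
    have : ∑ i ∈ Finset.Icc 1 m, a i * (if i ≤ m + 1 then g (m + 1 - i) else 0)
        = ∑ i ∈ Finset.Icc 1 m, a i * f (m + 1 - i) := by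
      apply Finset.sum_congr rfl
      intro i hi
      simp only [Finset.mem_Icc] at hi
      rw [if_pos (by omega), ih (m + 1 - i) (by omega) (by omega)]
    rw [this]; ring
  · -- k < n
    rw [hg n hn, hcbig n hnk, hf n (by omega), zero_add]
    apply Finset.sum_congr rfl
    intro i hi
    simp only [Finset.mem_Icc] at hi
    rw [if_pos (by omega), ih (n - i) (by omega) (by omega)]
end

section
/- Let k ≥ 2 and let a_1,…,a_k be integers, s_j = a_1 + … + a_j. Define A_1,…,A_k : ℕ → ℤ by A_1(0)=1, A_j(0)=0 for 2 ≤ j ≤ k, and for n ≥ 0: A_1(n+1) = Σ_{j=1}^{k} (s_j − 1)·A_j(n); A_{j+1}(n+1) = A_j(n) for 1 ≤ j ≤ k−2; A_k(n+1) = A_{k−1}(n) + A_k(n). Then for every n ≥ 0, A_1(n) = f_n − f_{n−1}, where f is the C-finite sequence with coefficients a_1,…,a_k and default initial conditions and f_{−1} = 0. (Equivalently, the generating function of A_1 is (1−x)/(1 − a_1 x − a_2 x² − … − a_k x^k).) -/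
/-- Auxiliary: `f n − f (n−1)` with `f (−1) = 0`. -/
def gA (f : ℕ → ℤ) (n : ℕ) : ℤ := f n - if 1 ≤ n then f (n - 1) else 0

/-- Auxiliary: `f (n + 1 − j)` with negative indices mapped to `0`. -/
def FA (f : ℕ → ℤ) (n j : ℕ) : ℤ := if j ≤ n + 1 then f (n + 1 - j) else 0

/-- The number `A₁(n)` of nodes labelled `(s₁)` at level `n` of the generating tree of the
succession rule (9) of the paper equals `f_n − f_{n−1}` (with `f_{−1} = 0`), where `f` is
the C-finite sequence with coefficients `a₁, …, a_k` and default initial conditions. -/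
theorem stmt_7 (k : ℕ) (hk : 2 ≤ k) (a : ℕ → ℤ)
    (f : ℕ → ℤ) (hf0 : f 0 = 1)
    (hf : ∀ n : ℕ, 1 ≤ n →
      f n = ∑ i ∈ Finset.Icc 1 k, a i * (if i ≤ n then f (n - i) else 0))
    (s : ℕ → ℤ) (hs : ∀ j, s j = ∑ l ∈ Finset.Icc 1 j, a l)
    (A : ℕ → ℕ → ℤ)
    (hA10 : A 1 0 = 1)
    (hAj0 : ∀ j, 2 ≤ j → j ≤ k → A j 0 = 0)
    (hA1 : ∀ n : ℕ, A 1 (n + 1) = ∑ j ∈ Finset.Icc 1 k, (s j - 1) * A j n)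
    (hAmid : ∀ n : ℕ, ∀ j, 1 ≤ j → j ≤ k - 2 → A (j + 1) (n + 1) = A j n)
    (hAk : ∀ n : ℕ, A k (n + 1) = A (k - 1) n + A k n) :
    ∀ n : ℕ, A 1 n = f n - (if 1 ≤ n then f (n - 1) else 0) := by
  suffices H : ∀ n, (∀ j, 1 ≤ j → j ≤ k - 1 →
      A j n = if j - 1 ≤ n then gA f (n - (j - 1)) else 0) ∧
      A k n = if k - 1 ≤ n then f (n - (k - 1)) else 0 by
    intro n
    have h := (H n).1 1 le_rfl (by omega)
    simpa [gA] using h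
  intro n
  induction n with
  | zero =>
    refine ⟨?_, ?_⟩
    · intro j h1 h2
      rcases Nat.eq_or_lt_of_le h1 with h | h
      · rw [← h]
        simp [hA10, gA, hf0]
      · rw [hAj0 j (by omega) (by omega), if_neg (by omega)]
    · rw [hAj0 k hk le_rfl, if_neg (by omega)]
  | succ n ih =>
    obtain ⟨ih1, ihk⟩ := ih
    have hAF : ∀ j, 1 ≤ j → j ≤ k - 1 → A j n = FA f n j - FA f n (j + 1) := by
      intro j h1 h2
      rw [ih1 j h1 h2]
      rcases lt_trichotomy j (n + 1) with h | h | h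
      · rw [if_pos (by omega)]
        unfold FA gA
        rw [if_pos (by omega : 1 ≤ n - (j - 1)), if_pos (by omega : j ≤ n + 1),
          if_pos (by omega : j + 1 ≤ n + 1)]
        rw [show n - (j - 1) = n + 1 - j from by omega,
          show n + 1 - j - 1 = n + 1 - (j + 1) from by omega]
      · rw [if_pos (by omega)]
        unfold FA gA
        rw [if_neg (by omega : ¬ 1 ≤ n - (j - 1)), if_pos (by omega : j ≤ n + 1),
          if_neg (by omega : ¬ j + 1 ≤ n + 1)]
        rw [show n - (j - 1) = 0 from by omega, show n + 1 - j = 0 from by omega]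
      · rw [if_neg (by omega)]
        unfold FA
        rw [if_neg (by omega), if_neg (by omega)]
        ring
    have hAkF : A k n = FA f n k := by
      rw [ihk]
      unfold FA
      by_cases h : k - 1 ≤ n
      · rw [if_pos h, if_pos (by omega), show n - (k - 1) = n + 1 - k from by omega]
      · rw [if_neg h, if_neg (by omega)]
    have hT : ∀ d l, l + d = k → 1 ≤ l → (∑ j ∈ Finset.Icc l k, A j n) = FA f n l := by
      intro d
      induction d with
      | zero =>
        intro l hl h1
        have hlk : l = k := by omega
        subst hlk
        rw [Finset.Icc_self, Finset.sum_singleton, hAkF]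
      | succ d hd =>
        intro l hl h1
        have hins : Finset.Icc l k = insert l (Finset.Icc (l + 1) k) := by
          ext x; simp only [Finset.mem_Icc, Finset.mem_insert]; omega
        rw [hins, Finset.sum_insert (by simp)]
        rw [hd (l + 1) (by omega) (by omega), hAF l h1 (by omega)]
        ring
    have hmain : A 1 (n + 1) = f (n + 1) - f n := by
      rw [hA1 n]
      have e1 : (∑ j ∈ Finset.Icc 1 k, (s j - 1) * A j n)
          = (∑ j ∈ Finset.Icc 1 k, (∑ l ∈ Finset.Icc 1 j, a l) * A j n)
            - ∑ j ∈ Finset.Icc 1 k, A j n := by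
        rw [← Finset.sum_sub_distrib]
        refine Finset.sum_congr rfl fun j hj => ?_
        rw [hs j]; ring
      rw [e1]
      have e2 : (∑ j ∈ Finset.Icc 1 k, (∑ l ∈ Finset.Icc 1 j, a l) * A j n)
          = ∑ l ∈ Finset.Icc 1 k, a l * FA f n l := by
        calc (∑ j ∈ Finset.Icc 1 k, (∑ l ∈ Finset.Icc 1 j, a l) * A j n)
            = ∑ j ∈ Finset.Icc 1 k, ∑ l ∈ Finset.Icc 1 j, a l * A j n := by
              refine Finset.sum_congr rfl fun j hj => ?_
              rw [Finset.sum_mul]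
          _ = ∑ l ∈ Finset.Icc 1 k, ∑ j ∈ Finset.Icc l k, a l * A j n := by
              refine Finset.sum_comm' fun x y => ?_
              simp only [Finset.mem_Icc]; omega
          _ = ∑ l ∈ Finset.Icc 1 k, a l * FA f n l := by
              refine Finset.sum_congr rfl fun l hl => ?_
              simp only [Finset.mem_Icc] at hl
              rw [← Finset.mul_sum, hT (k - l) l (by omega) hl.1]
      rw [e2, hT (k - 1) 1 (by omega) le_rfl]
      have e3 : FA f n 1 = f n := by
        unfold FA
        rw [if_pos (by omega)]
        congr 1
      rw [e3, hf (n + 1) (by omega)]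
      unfold FA
      rfl
    refine ⟨?_, ?_⟩
    · intro j h1 h2
      rcases Nat.eq_or_lt_of_le h1 with h | h
      · rw [← h]
        rw [hmain, if_pos (by omega)]
        simp [gA]
      · have hmid := hAmid n (j - 1) (by omega) (by omega)
        rw [show j - 1 + 1 = j from by omega] at hmid
        rw [hmid, ih1 (j - 1) (by omega) (by omega)]
        by_cases hle : j - 1 - 1 ≤ n
        · rw [if_pos hle, if_pos (by omega)]
          congr 1
          omega
        · rw [if_neg hle, if_neg (by omega)]
    · rw [hAk n, ihk, ih1 (k - 1) (by omega) le_rfl]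
      by_cases h1 : k - 1 ≤ n
      · rw [if_pos (by omega : k - 1 - 1 ≤ n), if_pos h1, if_pos (by omega)]
        unfold gA
        rw [if_pos (by omega : 1 ≤ n - (k - 1 - 1))]
        rw [show n - (k - 1 - 1) = n + 1 - (k - 1) from by omega,
          show n + 1 - (k - 1) - 1 = n - (k - 1) from by omega]
        ring
      · by_cases h2 : k - 2 ≤ n
        · rw [if_pos (by omega : k - 1 - 1 ≤ n), if_neg h1, if_pos (by omega)]
          rw [show n - (k - 1 - 1) = 0 from by omega,
            show n + 1 - (k - 1) = 0 from by omega]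
          simp [gA, hf0]
        · rw [if_neg (by omega), if_neg h1, if_neg (by omega)]
          ring
end

section
/- Let k ≥ 2 and let a_1,…,a_k be integers, s_j = a_1 + … + a_j. Define A_1,…,A_k : ℕ → ℤ by A_1(0)=1, A_j(0)=0 for 2 ≤ j ≤ k, and for n ≥ 0: A_1(n+1) = Σ_{j=1}^{k} (s_j − 1)·A_j(n); A_{j+1}(n+1) = A_j(n) for 1 ≤ j ≤ k−2; A_k(n+1) = A_{k−1}(n) + A_k(n). Let f be the C-finite sequence with coefficients a_1,…,a_k and default initial conditions, with the convention f_m = 0 for m < 0. Then for every n ≥ 0: A_j(n) = f_{n−j+1} − f_{n−j} for all 2 ≤ j ≤ k−1, and A_k(n) = f_{n−k+1}. (Equivalently, A_j(x) = x^{j−1}·A_1(x) for 2 ≤ j ≤ k−1 and A_k(x) = x^{k−1}/(1−x)·A_1(x), where A_1(x) = (1−x)/(1 − a_1 x − … − a_k x^k).) -/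
/-- For the label sequences of the succession rule (9) of the paper:
`A_j(n) = f_{n−j+1} − f_{n−j}` for `2 ≤ j ≤ k−1`, and `A_k(n) = f_{n−k+1}`, where `f` is
the C-finite sequence with coefficients `a₁, …, a_k`, default initial conditions, and
`f_m = 0` for `m < 0`. -/
theorem stmt_8 (k : ℕ) (hk : 2 ≤ k) (a : ℕ → ℤ)
    (f : ℕ → ℤ) (hf0 : f 0 = 1)
    (hf : ∀ n : ℕ, 1 ≤ n →
      f n = ∑ i ∈ Finset.Icc 1 k, a i * (if i ≤ n then f (n - i) else 0))
    (s : ℕ → ℤ) (hs : ∀ j, s j = ∑ l ∈ Finset.Icc 1 j, a l)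
    (A : ℕ → ℕ → ℤ)
    (hA10 : A 1 0 = 1)
    (hAj0 : ∀ j, 2 ≤ j → j ≤ k → A j 0 = 0)
    (hA1 : ∀ n : ℕ, A 1 (n + 1) = ∑ j ∈ Finset.Icc 1 k, (s j - 1) * A j n)
    (hAmid : ∀ n : ℕ, ∀ j, 1 ≤ j → j ≤ k - 2 → A (j + 1) (n + 1) = A j n)
    (hAk : ∀ n : ℕ, A k (n + 1) = A (k - 1) n + A k n) :
    ∀ n : ℕ,
      (∀ j, 2 ≤ j → j ≤ k - 1 →
        A j n = (if j ≤ n + 1 then f (n + 1 - j) else 0) -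
                (if j ≤ n then f (n - j) else 0)) ∧
      A k n = (if k ≤ n + 1 then f (n + 1 - k) else 0) := by
  set g : ℕ → ℕ → ℤ := fun m j => if j ≤ m then f (m - j) else 0 with hgdef
  have hshift : ∀ m j, g (m + 1) (j + 1) = g m j := by
    intro m j
    simp only [hgdef, Nat.add_le_add_iff_right, Nat.succ_sub_succ]
  have hg0 : ∀ m, g m 0 = f m := by intro m; simp [hgdef]
  have hgz : ∀ j, 1 ≤ j → g 0 j = 0 := by
    intro j hj
    simp only [hgdef]
    rw [if_neg]; omega
  -- strengthened statement
  have main : ∀ n, (∀ j, 1 ≤ j → j ≤ k - 1 →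
      A j n = g (n + 1) j - g (n + 1) (j + 1)) ∧ A k n = g (n + 1) k := by
    intro n
    induction n with
    | zero =>
      constructor
      · intro j hj1 hj2
        rcases Nat.lt_or_ge j 2 with hj | hj
        · have hj1' : j = 1 := by omega
          subst hj1'
          have : g 1 1 = f 0 := by simp [hgdef]
          rw [this, hf0, hA10]
          have : g 1 2 = 0 := by simp only [hgdef]; rw [if_neg]; omega
          rw [this]; ring
        · rw [hAj0 j hj (by omega)]
          have h1 : g 1 j = 0 := by simp only [hgdef]; rw [if_neg]; omega
          have h2 : g 1 (j + 1) = 0 := by simp only [hgdef]; rw [if_neg]; omega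
          rw [h1, h2]; ring
      · rw [hAj0 k hk le_rfl]
        have : g 1 k = 0 := by simp only [hgdef]; rw [if_neg]; omega
        rw [this]
    | succ n ih =>
      -- telescoping sums from ih
      have tele : ∀ l, 1 ≤ l → l ≤ k → ∑ j ∈ Finset.Icc l k, A j n = g (n + 1) l := by
        have key : ∀ d l, l + d = k → 1 ≤ l →
            ∑ j ∈ Finset.Icc l k, A j n = g (n + 1) l := by
          intro d
          induction d with
          | zero =>
            intro l hl hl1
            have : l = k := by omega
            subst this
            rw [Finset.Icc_self, Finset.sum_singleton, ih.2]
          | succ d ihd =>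
            intro l hl hl1
            have hsplit : Finset.Icc l k = insert l (Finset.Icc (l + 1) k) := by
              ext x
              simp only [Finset.mem_Icc, Finset.mem_insert]
              omega
            rw [hsplit, Finset.sum_insert (by simp only [Finset.mem_Icc]; omega)]
            rw [ihd (l + 1) (by omega) (by omega)]
            rw [ih.1 l hl1 (by omega)]
            ring
        intro l hl1 hl2
        exact key (k - l) l (by omega) hl1
      constructor
      · intro j hj1 hj2
        match j, hj1 with
        | 1, _ =>
          -- the main computation
          rw [hA1 n]
          have hsum : ∑ j ∈ Finset.Icc 1 k, (s j - 1) * A j n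
              = (∑ j ∈ Finset.Icc 1 k, s j * A j n) - ∑ j ∈ Finset.Icc 1 k, A j n := by
            rw [← Finset.sum_sub_distrib]
            congr 1; ext j; ring
          rw [hsum, tele 1 le_rfl (by omega)]
          have hsj : ∑ j ∈ Finset.Icc 1 k, s j * A j n
              = ∑ l ∈ Finset.Icc 1 k, a l * g (n + 1) l := by
            calc ∑ j ∈ Finset.Icc 1 k, s j * A j n
                = ∑ j ∈ Finset.Icc 1 k, ∑ l ∈ Finset.Icc 1 k,
                    (if l ≤ j then a l * A j n else 0) := by
                  refine Finset.sum_congr rfl ?_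
                  intro j hj
                  rw [Finset.mem_Icc] at hj
                  rw [hs j, Finset.sum_mul, ← Finset.sum_filter]
                  congr 1
                  ext x
                  simp only [Finset.mem_Icc, Finset.mem_filter]
                  omega
              _ = ∑ l ∈ Finset.Icc 1 k, ∑ j ∈ Finset.Icc 1 k,
                    (if l ≤ j then a l * A j n else 0) := Finset.sum_comm
              _ = ∑ l ∈ Finset.Icc 1 k, a l * g (n + 1) l := by
                  refine Finset.sum_congr rfl ?_
                  intro l hl
                  rw [Finset.mem_Icc] at hl
                  rw [← Finset.sum_filter]
                  have hfil : (Finset.Icc 1 k).filter (fun j => l ≤ j) = Finset.Icc l k := by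
                    ext x
                    simp only [Finset.mem_Icc, Finset.mem_filter]
                    omega
                  rw [hfil, ← Finset.mul_sum, tele l hl.1 hl.2]
          rw [hsj]
          have hfn1 : ∑ l ∈ Finset.Icc 1 k, a l * g (n + 1) l = f (n + 1) := by
            rw [hf (n + 1) (by omega)]
          rw [hfn1]
          have h1 : g (n + 1 + 1) 1 = f (n + 1) := by
            simp only [hgdef]
            rw [if_pos (by omega)]
            exact congrArg f (by omega)
          have h2 : g (n + 1 + 1) (1 + 1) = f n := by
            simp only [hgdef]
            rw [if_pos (by omega)]
            exact congrArg f (by omega)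
          have h3 : g (n + 1) 1 = f n := by
            simp only [hgdef]
            rw [if_pos (by omega)]
            exact congrArg f (by omega)
          rw [h1, h2, h3]
        | (m + 2), _ =>
          have hm : 1 ≤ m + 1 := by omega
          have hm2 : m + 1 ≤ k - 2 := by omega
          rw [show m + 2 = (m + 1) + 1 from rfl, hAmid n (m + 1) hm hm2]
          rw [ih.1 (m + 1) hm (by omega)]
          rw [← hshift (n + 1) (m + 1), ← hshift (n + 1) (m + 2)]
      · rw [hAk n]
        have hk1 : 1 ≤ k - 1 := by omega
        rw [ih.1 (k - 1) hk1 le_rfl, ih.2]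
        have hkk : k - 1 + 1 = k := by omega
        rw [hkk]
        have h := hshift (n + 1) (k - 1)
        rw [hkk] at h
        rw [h]
        ring
  -- derive the stated form
  intro n
  refine ⟨?_, ?_⟩
  · intro j h2 hk1
    have := (main n).1 j (by omega) hk1
    rw [this]
    have hj1 : ∃ m, j = m + 1 := ⟨j - 1, by omega⟩
    obtain ⟨m, rfl⟩ := hj1
    rw [hshift n (m + 1)]
  · exact (main n).2
end

section
/- Define B : ℕ × ℕ → ℕ by B(0,1) = 1, B(0,j) = 0 for j ≠ 1, and for n ≥ 0 and j ≥ 1: B(n+1, j) = j·B(n, j+1) + B(n, j−1), with B(n+1, 0) = 0 (here B(n, j) is the number of nodes labelled (j) at level n of the generating tree of the succession rule with axiom (1) and production (k) ⇝ (k−1)^{k−1}(k+1), a node labelled (j) being placed so that B(n,j) = 0 whenever j > n+1). Then for every n ≥ 0, Σ_{j=0}^{n+1} B(n, j) = f_n, where f : ℕ → ℕ is the number of involutions of n, defined by f_0 = 1, f_1 = 1 and f_n = f_{n−1} + (n−1)·f_{n−2} for n ≥ 2. -/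
/-- Number of perfect matchings on `n` points. -/
def D : ℕ → ℕ
  | 0 => 1
  | 1 => 0
  | (n+2) => (n+1) * D n

lemma D_two (n : ℕ) : D (n+2) = (n+1) * D n := rfl

lemma aux1 (n k : ℕ) :
    (k+1) * (n.choose (k+1) * D (n - (k+1))) = n.choose k * D (n - k + 1) := by
  rcases le_or_gt (k+1) n with h | h
  · obtain ⟨t, rfl⟩ : ∃ t, n = k + 1 + t := ⟨n - (k+1), by omega⟩
    have h1 : k + 1 + t - (k + 1) = t := by omega
    have h2 : k + 1 + t - k + 1 = t + 2 := by omega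
    rw [h1, h2, D_two]
    have hc := Nat.choose_succ_right_eq (k + 1 + t) k
    have h3 : k + 1 + t - k = t + 1 := by omega
    rw [h3] at hc
    calc (k+1) * ((k+1+t).choose (k+1) * D t)
        = ((k+1+t).choose (k+1) * (k+1)) * D t := by ring
      _ = ((k+1+t).choose k * (t+1)) * D t := by rw [hc]
      _ = (k+1+t).choose k * ((t+1) * D t) := by ring
  · have h1 : n.choose (k+1) = 0 := Nat.choose_eq_zero_of_lt (by omega)
    have h2 : n - k + 1 = 1 ∨ n.choose k = 0 := by
      rcases Nat.lt_or_ge n k with hk | hk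
      · exact Or.inr (Nat.choose_eq_zero_of_lt hk)
      · left; omega
    rcases h2 with h2 | h2
    · rw [h1, h2]; simp [show D 1 = 0 from rfl]
    · rw [h1, h2]; simp

lemma key (n k : ℕ) :
    (n+1).choose k * D (n+1-k) =
      (k+1) * (n.choose (k+1) * D (n - (k+1))) +
        (if k = 0 then 0 else n.choose (k-1) * D (n - (k-1))) := by
  cases k with
  | zero =>
      simp only [if_pos rfl, add_zero]
      have := aux1 n 0
      simpa using this.symm
  | succ s =>
      simp only [if_neg (Nat.succ_ne_zero s), Nat.succ_sub_one]
      have h1 : n + 1 - (s + 1) = n - s := by omega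
      rw [h1, aux1 n (s+1)]
      rcases le_or_gt (s+1) n with h | h
      · have h2 : n - (s+1) + 1 = n - s := by omega
        rw [h2, Nat.choose_succ_succ' n s]
        ring
      · have h3 : n.choose (s+1) = 0 := Nat.choose_eq_zero_of_lt h
        have h4 : (n+1).choose (s+1) = n.choose s := by
          rw [Nat.choose_succ_succ' n s, h3, add_zero]
        rw [h3, h4]; ring

/-- row sums -/
def g (n : ℕ) : ℕ := ∑ k ∈ Finset.range (n+1), n.choose k * D (n-k)

def u (n : ℕ) : ℕ := ∑ k ∈ Finset.range (n+1), n.choose k * D (n+1-k)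

lemma gu (n : ℕ) : g (n+1) = g n + u n := by
  unfold g u
  rw [Finset.sum_range_succ' (fun k => (n+1).choose k * D (n+1-k)) (n+1)]
  have h1 : ∀ k ∈ Finset.range (n+1),
      (n+1).choose (k+1) * D (n+1-(k+1)) =
        n.choose k * D (n-k) + n.choose (k+1) * D (n-k) := by
    intro k _
    have : n + 1 - (k+1) = n - k := by omega
    rw [this, Nat.choose_succ_succ n k, add_mul]
  rw [Finset.sum_congr rfl h1, Finset.sum_add_distrib]
  have h2 : ∑ k ∈ Finset.range (n+1), n.choose (k+1) * D (n-k) + (n+1).choose 0 * D (n+1-0)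
      = ∑ k ∈ Finset.range (n+1), n.choose k * D (n+1-k) := by
    rw [Finset.sum_range_succ' (fun k => n.choose k * D (n+1-k)) n]
    rw [Finset.sum_range_succ]
    have h3 : ∀ k, n + 1 - (k+1) = n - k := fun k => by omega
    simp only [h3, Nat.choose_self, Nat.choose_zero_right, Nat.sub_zero]
    rw [Nat.choose_eq_zero_of_lt (by omega : n < n+1)]
    simp
  omega

lemma u_succ (n : ℕ) : u (n+1) = (n+1) * g n := by
  unfold u g
  have h1 : ∀ k ∈ Finset.range (n+2),
      (n+1).choose k * D (n+2-k) = (n+1) * (n.choose k * D (n-k)) := by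
    intro k hk
    rw [Finset.mem_range] at hk
    rcases Nat.lt_or_ge k (n+1) with h | h
    · have h2 : n + 2 - k = (n - k) + 2 := by omega
      rw [h2, D_two]
      have h3 : n - k + 1 = n + 1 - k := by omega
      have hc := Nat.choose_mul_succ_eq n k
      calc (n+1).choose k * ((n-k+1) * D (n-k))
          = ((n+1).choose k * (n+1-k)) * D (n-k) := by rw [h3]; ring
        _ = (n.choose k * (n+1)) * D (n-k) := by rw [hc]
        _ = (n+1) * (n.choose k * D (n-k)) := by ring
    · have hk' : k = n + 1 := by omega
      subst hk'
      rw [Nat.choose_eq_zero_of_lt (by omega : n < n+1)]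
      simp [show D 1 = 0 from rfl]
  rw [Finset.sum_congr rfl h1, ← Finset.mul_sum]
  rw [Finset.sum_range_succ]
  rw [Nat.choose_eq_zero_of_lt (by omega : n < n+1)]
  simp

/-- The generating tree of the succession rule `(1); (k) ⇝ (k−1)^{k−1}(k+1)` has, at
level `n`, exactly `f_n` nodes, where `f_n` is the number of involutions of `n`. -/
theorem stmt_10 (B : ℕ → ℕ → ℕ)
    (hB01 : B 0 1 = 1) (hB0 : ∀ j, j ≠ 1 → B 0 j = 0)
    (hB : ∀ n j : ℕ, 1 ≤ j → B (n + 1) j = j * B n (j + 1) + B n (j - 1))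
    (hB0' : ∀ n : ℕ, B (n + 1) 0 = 0)
    (f : ℕ → ℕ) (hf0 : f 0 = 1) (hf1 : f 1 = 1)
    (hf : ∀ n : ℕ, f (n + 2) = f (n + 1) + (n + 1) * f n) :
    ∀ n : ℕ, ∑ j ∈ Finset.range (n + 2), B n j = f n := by
  have hBzero : ∀ n, B n 0 = 0 := by
    intro n; cases n with
    | zero => exact hB0 0 (by omega)
    | succ m => exact hB0' m
  have hBval : ∀ n j, B n (j+1) = n.choose j * D (n - j) := by
    intro n
    induction n with
    | zero =>
        intro j
        cases j with
        | zero => simpa [show D 0 = 1 from rfl] using hB01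
        | succ s =>
            rw [hB0 (s+2) (by omega), Nat.choose_eq_zero_of_lt (by omega)]
            simp
    | succ m ih =>
        intro j
        rw [hB m (j+1) (by omega), key m j]
        congr 1
        · rw [ih (j+1)]
        · cases j with
          | zero => simpa using hBzero m
          | succ s => simp only [if_neg (Nat.succ_ne_zero s), Nat.succ_sub_one]; exact ih s
  have hsum : ∀ n, ∑ j ∈ Finset.range (n + 2), B n j = g n := by
    intro n
    rw [Finset.sum_range_succ' (fun j => B n j) (n+1), hBzero]
    unfold g
    rw [add_zero]
    exact Finset.sum_congr rfl fun k _ => hBval n k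
  have hgf : ∀ n, g n = f n := by
    intro n
    induction n using Nat.twoStepInduction with
    | zero => rw [hf0]; unfold g; simp [D]
    | one => rw [hf1]; unfold g; simp [Finset.sum_range_succ, D]
    | more m ih1 ih2 =>
        rw [hf m, gu (m+1), u_succ m, ih1, ih2]
  intro n
  rw [hsum n, hgf n]
end
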